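/- arXiv:math/0410315 — 2 statements merged into one kernel-verified Lean document; each statement's English description precedes it below -/
import Mathlib

section
/- Let G be a group acting on the left on a set M, let μ be a measure on G, and let c : M → ℝ be a function such that for every x ∈ M the function h ↦ c(h•x)² is μ-integrable and ∫_G c(h•x)² dμ(h) = 1 (a cut-off function). Define e : G × M → ℝ by e(g, x) = c(x)·c(g•x). Then e is an idempotent for the crossed-product convolution: for all g ∈ G and x ∈ M, ∫_G e(h, x)·e(gh⁻¹, h•x) dμ(h) = e(g, x). -/
open MeasureTheory

/-- **The cut-off idempotent.**
Let a group `G` act on a set `M`, let `μ` be a measure on `G`, and let `c : M → ℝ`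
be a cut-off function: for every `x`, `h ↦ c(h•x)²` is integrable with integral `1`.
Then `e(g, x) = c(x)·c(g•x)` is an idempotent for the crossed-product convolution:
`∫ e(h, x)·e(gh⁻¹, h•x) dμ(h) = e(g, x)`. -/
theorem cutoff_idempotent
    {G M : Type*} [Group G] [MulAction G M] [MeasurableSpace G] (μ : Measure G)
    (c : M → ℝ)
    (hint : ∀ x : M, Integrable (fun h : G => (c (h • x)) ^ 2) μ)
    (hcut : ∀ x : M, ∫ h, (c (h • x)) ^ 2 ∂μ = 1)
    (g : G) (x : M) :
    ∫ h, (c x * c (h • x)) * (c (h • x) * c ((g * h⁻¹) • (h • x))) ∂μ =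
      c x * c (g • x) := by
  have key : ∀ h : G, (c x * c (h • x)) * (c (h • x) * c ((g * h⁻¹) • (h • x)))
      = (c x * c (g • x)) * (c (h • x)) ^ 2 := by
    intro h
    rw [smul_smul, inv_mul_cancel_right]
    ring
  simp_rw [key]
  rw [integral_const_mul, hcut x, mul_one]
end

section
/- Let A be a unital complex Banach algebra and e ∈ A an element such that ‖e − e²‖ < 1/4. Then the series ê = e + Σ_{k≥1} ((2k)!/(k!)²) · (e − 1/2) · (e − e²)^k converges absolutely in A, and its sum is an idempotent: ê² = ê. -/
private lemma two_mul_weighted (m : ℕ) :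
    2 * ∑ i ∈ Finset.range (m + 1), i * (Nat.centralBinom i * Nat.centralBinom (m - i))
      = m * ∑ i ∈ Finset.range (m + 1), Nat.centralBinom i * Nat.centralBinom (m - i) := by
  have h := Finset.sum_range_reflect
      (fun i => i * (Nat.centralBinom i * Nat.centralBinom (m - i))) (m + 1)
  simp only [Nat.add_sub_cancel] at h
  rw [two_mul]
  nth_rewrite 1 [← h]
  rw [← Finset.sum_add_distrib, Finset.mul_sum]
  refine Finset.sum_congr rfl fun i hi => ?_
  have hi' : i ≤ m := Nat.lt_succ_iff.mp (Finset.mem_range.mp hi)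
  rw [Nat.sub_sub_self hi']
  rw [mul_comm (Nat.centralBinom (m - i)) (Nat.centralBinom i)]
  rw [← add_mul, Nat.sub_add_cancel hi']

private lemma centralBinom_conv (n : ℕ) :
    ∑ i ∈ Finset.range (n + 1), Nat.centralBinom i * Nat.centralBinom (n - i) = 4 ^ n := by
  induction n with
  | zero => simp
  | succ n ih =>
    have hT : ∑ i ∈ Finset.range (n + 2), i * (Nat.centralBinom i * Nat.centralBinom (n + 1 - i))
        = 4 * ∑ i ∈ Finset.range (n + 1), i * (Nat.centralBinom i * Nat.centralBinom (n - i))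
          + 2 * ∑ i ∈ Finset.range (n + 1), Nat.centralBinom i * Nat.centralBinom (n - i) := by
      rw [Finset.sum_range_succ' (fun i => i * (Nat.centralBinom i * Nat.centralBinom (n + 1 - i)))]
      simp only [Nat.zero_eq, zero_mul, add_zero]
      rw [Finset.mul_sum, Finset.mul_sum, ← Finset.sum_add_distrib]
      refine Finset.sum_congr rfl fun i hi => ?_
      have h1 : n + 1 - (i + 1) = n - i := by omega
      rw [h1, ← mul_assoc, Nat.succ_mul_centralBinom_succ i]
      ring
    have key : (n + 1) * ∑ i ∈ Finset.range (n + 2), Nat.centralBinom i * Nat.centralBinom (n + 1 - i)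
        = (n + 1) * (4 * ∑ i ∈ Finset.range (n + 1), Nat.centralBinom i * Nat.centralBinom (n - i)) := by
      have h2 := two_mul_weighted (n + 1)
      have h3 := two_mul_weighted n
      calc (n + 1) * ∑ i ∈ Finset.range (n + 2), Nat.centralBinom i * Nat.centralBinom (n + 1 - i)
          = 2 * ∑ i ∈ Finset.range (n + 2), i * (Nat.centralBinom i * Nat.centralBinom (n + 1 - i)) := h2.symm
        _ = 2 * (4 * ∑ i ∈ Finset.range (n + 1), i * (Nat.centralBinom i * Nat.centralBinom (n - i))
              + 2 * ∑ i ∈ Finset.range (n + 1), Nat.centralBinom i * Nat.centralBinom (n - i)) := by rw [hT]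
        _ = 4 * (2 * ∑ i ∈ Finset.range (n + 1), i * (Nat.centralBinom i * Nat.centralBinom (n - i)))
              + 4 * ∑ i ∈ Finset.range (n + 1), Nat.centralBinom i * Nat.centralBinom (n - i) := by ring
        _ = 4 * (n * ∑ i ∈ Finset.range (n + 1), Nat.centralBinom i * Nat.centralBinom (n - i))
              + 4 * ∑ i ∈ Finset.range (n + 1), Nat.centralBinom i * Nat.centralBinom (n - i) := by rw [h3]
        _ = (n + 1) * (4 * ∑ i ∈ Finset.range (n + 1), Nat.centralBinom i * Nat.centralBinom (n - i)) := by ring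
    have := Nat.eq_of_mul_eq_mul_left (Nat.succ_pos n) key
    rw [this, ih]
    ring

private lemma centralBinom_le_four_pow (k : ℕ) : Nat.centralBinom k ≤ 4 ^ k := by
  have hk : k ∈ Finset.range (2 * k + 1) := by simp; omega
  calc Nat.centralBinom k = (2 * k).choose k := Nat.centralBinom_eq_two_mul_choose k
    _ ≤ ∑ m ∈ Finset.range (2 * k + 1), (2 * k).choose m :=
        Finset.single_le_sum (fun i _ => Nat.zero_le _) hk
    _ = 2 ^ (2 * k) := Nat.sum_range_choose (2 * k)
    _ = 4 ^ k := by rw [pow_mul]; norm_num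

/-- **The canonical idempotent lift.**
Let `A` be a unital complex Banach algebra and `e ∈ A` with `‖e − e²‖ < 1/4`.
Then the series `ê = e + Σ_{k≥1} ((2k)!/(k!)²)·(e − 1/2)·(e − e²)^k` converges
absolutely in `A` and its sum is an idempotent: `ê² = ê`. -/
theorem idempotent_lift_series {A : Type*} [NormedRing A] [NormedAlgebra ℂ A]
    [CompleteSpace A] (e : A) (he : ‖e - e ^ 2‖ < 1 / 4) :
    (Summable fun k : ℕ =>
      ‖((2 * (k + 1)).choose (k + 1)) •
        ((e - (2⁻¹ : ℂ) • (1 : A)) * (e - e ^ 2) ^ (k + 1))‖) ∧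
    (e + ∑' k : ℕ, ((2 * (k + 1)).choose (k + 1)) •
        ((e - (2⁻¹ : ℂ) • (1 : A)) * (e - e ^ 2) ^ (k + 1))) ^ 2 =
      e + ∑' k : ℕ, ((2 * (k + 1)).choose (k + 1)) •
        ((e - (2⁻¹ : ℂ) • (1 : A)) * (e - e ^ 2) ^ (k + 1)) := by
  simp only [show ∀ n : ℕ, (2 * n).choose n = Nat.centralBinom n from
    fun n => (Nat.centralBinom_eq_two_mul_choose n).symm]
  set x := e - e ^ 2 with hxdef
  set c := e - (2⁻¹ : ℂ) • (1 : A) with hcdef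
  have hex : Commute e x := (Commute.refl e).sub_right ((Commute.refl e).pow_right 2)
  have hcx : Commute c x := by
    refine Commute.sub_left hex ?_
    show ((2⁻¹ : ℂ) • (1 : A)) * x = x * ((2⁻¹ : ℂ) • (1 : A))
    rw [smul_mul_assoc, one_mul, mul_smul_comm, mul_one]
  set a : ℕ → A := fun k => Nat.centralBinom k • x ^ k with hadef
  set C : ℝ := max 1 ‖(1 : A)‖ with hCdef
  have hr0 : (0:ℝ) ≤ 4 * ‖x‖ := by positivity
  have hr1 : 4 * ‖x‖ < 1 := by linarith
  have hbound : ∀ k, ‖a k‖ ≤ C * (4 * ‖x‖) ^ k := by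
    intro k
    have h1 : ‖a k‖ = (Nat.centralBinom k : ℝ) * ‖x ^ k‖ := by
      rw [hadef]
      simp only [← Nat.cast_smul_eq_nsmul ℂ, norm_smul]
      simp
    have h2 : (Nat.centralBinom k : ℝ) ≤ 4 ^ k := by
      exact_mod_cast centralBinom_le_four_pow k
    rcases Nat.eq_zero_or_pos k with rfl | hk
    · rw [h1]
      simp only [Nat.centralBinom_zero, Nat.cast_one, pow_zero, mul_one, one_mul]
      exact le_max_right _ _
    · have h3 : ‖x ^ k‖ ≤ ‖x‖ ^ k := norm_pow_le' x hk
      calc ‖a k‖ = (Nat.centralBinom k : ℝ) * ‖x ^ k‖ := h1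
        _ ≤ 4 ^ k * ‖x‖ ^ k := by
            apply mul_le_mul h2 h3 (norm_nonneg _) (by positivity)
        _ = (4 * ‖x‖) ^ k := (mul_pow _ _ _).symm
        _ ≤ C * (4 * ‖x‖) ^ k := le_mul_of_one_le_left (by positivity) (le_max_left _ _)
  have hgeo : Summable fun k : ℕ => C * (4 * ‖x‖) ^ k :=
    (summable_geometric_of_lt_one hr0 hr1).mul_left C
  have hFn : Summable fun k => ‖a k‖ :=
    Summable.of_nonneg_of_le (fun _ => norm_nonneg _) hbound hgeo
  have hF : Summable a := hFn.of_norm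
  set F : A := ∑' k, a k with hFdef
  -- the terms of the series in the statement
  have hterm : ∀ k : ℕ, Nat.centralBinom (k+1) • (c * x ^ (k+1)) = c * a (k+1) :=
    fun k => (mul_smul_comm _ _ _).symm
  -- first conjunct
  have hSn : Summable fun k : ℕ => ‖Nat.centralBinom (k+1) • (c * x ^ (k+1))‖ := by
    refine Summable.of_nonneg_of_le (fun _ => norm_nonneg _) (fun k => ?_)
      ((summable_geometric_of_lt_one hr0 hr1).mul_left (‖c‖ * (C * (4 * ‖x‖))))
    rw [hterm k]
    calc ‖c * a (k+1)‖ ≤ ‖c‖ * ‖a (k+1)‖ := norm_mul_le _ _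
      _ ≤ ‖c‖ * (C * (4 * ‖x‖) ^ (k+1)) :=
          mul_le_mul_of_nonneg_left (hbound _) (norm_nonneg c)
      _ = ‖c‖ * (C * (4 * ‖x‖)) * (4 * ‖x‖) ^ k := by ring
  refine ⟨hSn, ?_⟩
  -- value of the tail series
  have hFs : Summable fun k => a (k+1) := (summable_nat_add_iff 1).mpr hF
  have hshift : ∑' k, a (k+1) = F - 1 := by
    have h0 := Summable.tsum_eq_zero_add hF
    have ha0 : a 0 = 1 := by simp [hadef]
    rw [ha0] at h0
    rw [eq_sub_iff_add_eq, add_comm]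
    exact h0.symm
  have hSval : (∑' k : ℕ, Nat.centralBinom (k+1) • (c * x ^ (k+1))) = c * F - c := by
    rw [tsum_congr hterm, hFs.tsum_mul_left c, hshift, mul_sub, mul_one]
  rw [hSval]
  -- geometric series
  have hy : ‖(4:ℂ) • x‖ < 1 := by
    rw [norm_smul]
    simpa using hr1
  have hFF : F * F = ∑' n : ℕ, ((4:ℂ) • x) ^ n := by
    rw [hFdef, tsum_mul_tsum_eq_tsum_sum_antidiagonal_of_summable_norm hFn hFn]
    refine tsum_congr fun n => ?_
    rw [Finset.Nat.sum_antidiagonal_eq_sum_range_succ_mk]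
    have hstep : ∀ i ∈ Finset.range (n+1),
        a i * a (n - i) = (Nat.centralBinom i * Nat.centralBinom (n - i)) • x ^ n := by
      intro i hi
      have hi' : i ≤ n := Nat.lt_succ_iff.mp (Finset.mem_range.mp hi)
      rw [hadef]
      dsimp only
      rw [smul_mul_assoc, mul_smul_comm, ← pow_add, Nat.add_sub_cancel' hi', smul_smul]
    rw [Finset.sum_congr rfl hstep, ← Finset.sum_smul, centralBinom_conv n, smul_pow,
      ← Nat.cast_smul_eq_nsmul ℂ]
    norm_num
  have hcc : c * c = (4⁻¹ : ℂ) • (1 : A) - x := by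
    rw [hcdef, hxdef]
    simp only [mul_sub, sub_mul, smul_mul_assoc, mul_smul_comm, one_mul, mul_one, smul_smul,
      pow_two]
    module
  have hcF : c * F = F * c := by
    rw [hFdef, ← hF.tsum_mul_left c, ← hF.tsum_mul_right c]
    refine tsum_congr fun k => ?_
    rw [hadef]
    dsimp only
    rw [mul_smul_comm, smul_mul_assoc, (hcx.pow_right k).eq]
  have hP2 : (c * F) * (c * F) = (4⁻¹ : ℂ) • (1 : A) := by
    have h1 : (c * F) * (c * F) = (c * c) * (F * F) := by
      rw [mul_assoc c F (c * F), ← mul_assoc F c F, ← hcF, mul_assoc c F F,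
        ← mul_assoc c c (F * F)]
    rw [h1, hcc, hFF]
    have h2 : (4⁻¹:ℂ) • (1:A) - x = (4⁻¹:ℂ) • ((1:A) - (4:ℂ) • x) := by
      rw [smul_sub, smul_smul]
      norm_num
    rw [h2, smul_mul_assoc, mul_neg_geom_series _ hy]
  have hE : e + (c * F - c) = (2⁻¹:ℂ) • (1:A) + c * F := by
    rw [hcdef]
    abel
  rw [hE]
  rw [pow_two]
  simp only [add_mul, mul_add, smul_mul_assoc, mul_smul_comm, one_mul, mul_one, hP2, smul_smul]
  module
end
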